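/- There is a universal constant C such that for every k ≥ 1, every (possibly partial) function g : {0,1}^k × {0,1}^k → {0,1}, every b ∈ {0,1} and every positive integer h: if g has a (1/20, h)-hitting distribution over its b-monochromatic rectangles, then g has a (1/10, h)-hitting distribution over its b-monochromatic rectangles whose support has size at most C·2^k. -/

import Mathlib

open Finset

/-- The probability, under a distribution `μ` on rectangles `R = R.1 × R.2 ⊆ α × β`,
that the sampled rectangle intersects `X × Y`. -/
noncomputable def hitProb {α β : Type*} [Fintype α] [Fintype β] [DecidableEq α] [DecidableEq β]
    (μ : Finset α × Finset β → ℝ) (X : Finset α) (Y : Finset β) : ℝ :=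
  ∑ R ∈ Finset.univ.filter
      (fun R : Finset α × Finset β => (R.1 ∩ X).Nonempty ∧ (R.2 ∩ Y).Nonempty), μ R

/-- `μ` is a probability distribution on rectangles of `α × β`. -/
def IsDistribution {α β : Type*} [Fintype α] [Fintype β]
    (μ : Finset α × Finset β → ℝ) : Prop :=
  (∀ R, 0 ≤ μ R) ∧ ∑ R, μ R = 1

/-- `μ` is a `(δ, h)`-hitting distribution: every `X × Y` with
`|X| ≥ 2^(−h)·|α|` and `|Y| ≥ 2^(−h)·|β|` is hit with probability at least `1 − δ`. -/
def IsHitting {α β : Type*} [Fintype α] [Fintype β] [DecidableEq α] [DecidableEq β]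
    (μ : Finset α × Finset β → ℝ) (δ : ℝ) (h : ℤ) : Prop :=
  ∀ X : Finset α, ∀ Y : Finset β,
    (2 : ℝ) ^ (-h) * (Fintype.card α : ℝ) ≤ X.card →
    (2 : ℝ) ^ (-h) * (Fintype.card β : ℝ) ≤ Y.card →
    1 - δ ≤ hitProb μ X Y

lemma exists_sparse {α : Type*} [Fintype α] [DecidableEq α] [Nonempty α]
    (μ : Finset α × Finset α → ℝ) (hI : ℤ)
    (hμ0 : ∀ R, 0 ≤ μ R) (hμ1 : ∑ R, μ R = 1)
    (hhit : IsHitting μ (1 / 20) hI) :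
    ∃ ν : Finset α × Finset α → ℝ,
      (∀ R, 0 ≤ ν R) ∧ (∑ R, ν R = 1) ∧ (∀ R, ν R ≠ 0 → μ R ≠ 0) ∧
      IsHitting ν (1 / 10) hI ∧
      Nat.card {R : Finset α × Finset α // ν R ≠ 0} ≤ 100 * Fintype.card α := by
  classical
  set n : ℕ := Fintype.card α with hn
  have hnpos : 0 < n := Fintype.card_pos
  set m : ℕ := 10 * n with hm
  set t : ℕ := 10 * m with ht
  have hmpos : 0 < m := by positivity
  have htpos : 0 < t := by positivity
  set P : (Fin t → (Finset α × Finset α)) → ℝ := fun f => ∏ i, μ (f i) with hPdef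
  have hP0 : ∀ f, 0 ≤ P f := fun f => Finset.prod_nonneg (fun i _ => hμ0 _)
  have hPsum : ∑ f : Fin t → (Finset α × Finset α), P f = 1 := by
    have h1 : ∏ i : Fin t, (∑ R : (Finset α × Finset α), μ R) = ∑ f ∈ Fintype.piFinset (fun _ : Fin t => (univ : Finset (Finset α × Finset α))),
        ∏ i : Fin t, μ (f i) := Finset.prod_univ_sum _ _
    rw [Fintype.piFinset_univ] at h1
    rw [hPdef, ← h1, hμ1, Finset.prod_const, one_pow]
  set Large : Finset (Finset α × Finset α) := Finset.univ.filter (fun p : (Finset α × Finset α) =>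
    (2:ℝ)^(-hI) * (Fintype.card α : ℝ) ≤ p.1.card ∧
    (2:ℝ)^(-hI) * (Fintype.card α : ℝ) ≤ p.2.card) with hLarge
  set misses : (Finset α × Finset α) → (Fin t → (Finset α × Finset α)) → ℕ :=
    fun p f => (Finset.univ.filter
      (fun i => ¬(((f i).1 ∩ p.1).Nonempty ∧ ((f i).2 ∩ p.2).Nonempty))).card with hmisses
  -- per-pair tail bound
  have tail : ∀ p ∈ Large, ∑ f ∈ univ.filter (fun f : Fin t → (Finset α × Finset α) => m + 1 ≤ misses p f), P f
      ≤ ((11/10:ℝ)^10/3)^m := by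
    intro p hp
    set w : (Finset α × Finset α) → ℝ := fun R => if (R.1 ∩ p.1).Nonempty ∧ (R.2 ∩ p.2).Nonempty then 1 else 3 with hw
    have hw0 : ∀ R, 0 ≤ w R := by
      intro R; rw [hw]; dsimp only; split <;> norm_num
    have hhitp : (19:ℝ)/20 ≤ hitProb μ p.1 p.2 := by
      have hpL := Finset.mem_filter.mp hp
      have := hhit p.1 p.2 hpL.2.1 hpL.2.2
      linarith
    have hsplit : ∑ R ∈ univ.filter
          (fun R : (Finset α × Finset α) => (R.1 ∩ p.1).Nonempty ∧ (R.2 ∩ p.2).Nonempty), μ R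
        + ∑ R ∈ univ.filter
          (fun R : (Finset α × Finset α) => ¬((R.1 ∩ p.1).Nonempty ∧ (R.2 ∩ p.2).Nonempty)), μ R
        = 1 := by
      rw [Finset.sum_filter_add_sum_filter_not, hμ1]
    have hSle : ∑ R : (Finset α × Finset α), μ R * w R ≤ 11/10 := by
      have hs : ∑ R : (Finset α × Finset α), μ R * w R
          = ∑ R ∈ univ.filter
            (fun R : (Finset α × Finset α) => (R.1 ∩ p.1).Nonempty ∧ (R.2 ∩ p.2).Nonempty), μ R * 1
          + ∑ R ∈ univ.filter
            (fun R : (Finset α × Finset α) => ¬((R.1 ∩ p.1).Nonempty ∧ (R.2 ∩ p.2).Nonempty)), μ R * 3 := by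
        rw [← Finset.sum_filter_add_sum_filter_not univ
          (fun R : (Finset α × Finset α) => (R.1 ∩ p.1).Nonempty ∧ (R.2 ∩ p.2).Nonempty) (fun R => μ R * w R)]
        congr 1
        · apply Finset.sum_congr rfl; intro R hR
          rw [hw]; dsimp only; rw [if_pos (Finset.mem_filter.mp hR).2]
        · apply Finset.sum_congr rfl; intro R hR
          rw [hw]; dsimp only; rw [if_neg (Finset.mem_filter.mp hR).2]
      have hhp : hitProb μ p.1 p.2 = ∑ R ∈ univ.filter
          (fun R : (Finset α × Finset α) => (R.1 ∩ p.1).Nonempty ∧ (R.2 ∩ p.2).Nonempty), μ R := rfl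
      rw [hs]
      simp only [mul_one]
      rw [← hhp] at hsplit ⊢
      have h3 : ∑ R ∈ univ.filter
          (fun R : (Finset α × Finset α) => ¬((R.1 ∩ p.1).Nonempty ∧ (R.2 ∩ p.2).Nonempty)), μ R * 3
          = 3 * (1 - hitProb μ p.1 p.2) := by
        rw [← Finset.sum_mul]
        linarith [hsplit]
      rw [h3]
      linarith
    have hS0 : 0 ≤ ∑ R : (Finset α × Finset α), μ R * w R :=
      Finset.sum_nonneg (fun R _ => mul_nonneg (hμ0 R) (hw0 R))
    have hE : ∑ f : Fin t → (Finset α × Finset α), P f * 3 ^ (misses p f) = (∑ R : (Finset α × Finset α), μ R * w R) ^ t := by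
      have h1 : ∏ i : Fin t, (∑ R : (Finset α × Finset α), μ R * w R)
          = ∑ f ∈ Fintype.piFinset (fun _ : Fin t => (univ : Finset (Finset α × Finset α))),
            ∏ i : Fin t, μ (f i) * w (f i) := Finset.prod_univ_sum _ _
      rw [Fintype.piFinset_univ] at h1
      have h2 : ∏ i : Fin t, (∑ R : (Finset α × Finset α), μ R * w R) = (∑ R : (Finset α × Finset α), μ R * w R) ^ t := by
        rw [Finset.prod_const]; simp
      rw [← h2, h1]
      apply Finset.sum_congr rfl
      intro f _
      rw [Finset.prod_mul_distrib]
      congr 1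
      rw [hw]
      dsimp only
      rw [Finset.prod_ite (fun _ => (1:ℝ)) (fun _ => (3:ℝ))]
      rw [Finset.prod_const_one, Finset.prod_const, one_mul]
    have hEle : ∑ f : Fin t → (Finset α × Finset α), P f * 3 ^ (misses p f) ≤ (11/10:ℝ) ^ t := by
      rw [hE]; exact pow_le_pow_left₀ hS0 hSle t
    have hMarkov : (∑ f ∈ univ.filter (fun f : Fin t → (Finset α × Finset α) => m + 1 ≤ misses p f), P f) * 3 ^ m
        ≤ ∑ f : Fin t → (Finset α × Finset α), P f * 3 ^ (misses p f) := by
      rw [Finset.sum_mul]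
      refine le_trans (Finset.sum_le_sum ?_)
        (Finset.sum_le_sum_of_subset_of_nonneg (Finset.filter_subset _ _) ?_)
      · intro f hf
        have hf' := (Finset.mem_filter.mp hf).2
        refine mul_le_mul_of_nonneg_left ?_ (hP0 f)
        apply pow_le_pow_right₀ (by norm_num : (1:ℝ) ≤ 3)
        omega
      · intro f _ _
        exact mul_nonneg (hP0 f) (by positivity)
    have h3m : (0:ℝ) < 3 ^ m := by positivity
    rw [← le_div_iff₀ h3m] at hMarkov
    calc ∑ f ∈ univ.filter (fun f : Fin t → (Finset α × Finset α) => m + 1 ≤ misses p f), P f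
        ≤ (∑ f : Fin t → (Finset α × Finset α), P f * 3 ^ (misses p f)) / 3 ^ m := hMarkov
      _ ≤ (11/10:ℝ) ^ t / 3 ^ m := by gcongr
      _ = ((11/10:ℝ)^10/3)^m := by
          have h1 : ((11:ℝ)/10) ^ t = (((11:ℝ)/10) ^ 10) ^ m := by rw [ht, pow_mul]
          rw [h1, ← div_pow]
  -- union bound
  set Bad : Finset (Fin t → (Finset α × Finset α)) := univ.filter
    (fun f => ∃ p ∈ Large, m + 1 ≤ misses p f) with hBadDef
  have hBadsum : ∑ f ∈ Bad, P f ≤ (Large.card : ℝ) * ((11/10:ℝ)^10/3)^m := by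
    have step1 : ∑ f ∈ Bad, P f ≤ ∑ f ∈ Bad, ∑ p ∈ Large,
        (if m + 1 ≤ misses p f then P f else 0) := by
      apply Finset.sum_le_sum
      intro f hf
      obtain ⟨p₀, hp₀, hbad⟩ := (Finset.mem_filter.mp hf).2
      calc P f = (if m + 1 ≤ misses p₀ f then P f else 0) := (if_pos hbad).symm
        _ ≤ ∑ p ∈ Large, (if m + 1 ≤ misses p f then P f else 0) :=
          Finset.single_le_sum (f := fun p => if m + 1 ≤ misses p f then P f else 0)
            (fun q _ => by split; exacts [hP0 f, le_rfl]) hp₀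
    have step2 : ∑ f ∈ Bad, ∑ p ∈ Large, (if m + 1 ≤ misses p f then P f else 0)
        = ∑ p ∈ Large, ∑ f ∈ Bad, (if m + 1 ≤ misses p f then P f else 0) :=
      Finset.sum_comm
    have step3 : ∀ p ∈ Large, ∑ f ∈ Bad, (if m + 1 ≤ misses p f then P f else 0)
        ≤ ((11/10:ℝ)^10/3)^m := by
      intro p hp
      rw [← Finset.sum_filter]
      refine le_trans ?_ (tail p hp)
      apply Finset.sum_le_sum_of_subset_of_nonneg
      · exact Finset.filter_subset_filter _ (Finset.filter_subset _ _)
      · intro f _ _; exact hP0 f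
    calc ∑ f ∈ Bad, P f
        ≤ ∑ p ∈ Large, ∑ f ∈ Bad, (if m + 1 ≤ misses p f then P f else 0) := by
          rw [← step2]; exact step1
      _ ≤ ∑ p ∈ Large, ((11/10:ℝ)^10/3)^m := Finset.sum_le_sum step3
      _ = (Large.card : ℝ) * ((11/10:ℝ)^10/3)^m := by
          rw [Finset.sum_const, nsmul_eq_mul]
  have hcardLarge : (Large.card : ℝ) ≤ (4:ℝ) ^ n := by
    have h1 : Large.card ≤ Fintype.card (Finset α × Finset α) :=
      le_trans (Finset.card_filter_le _ _) (le_of_eq Finset.card_univ)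
    have h2 : Fintype.card (Finset α × Finset α) = 2 ^ n * 2 ^ n := by
      rw [Fintype.card_prod, Fintype.card_finset, ← hn]
    calc (Large.card : ℝ) ≤ (Fintype.card (Finset α × Finset α) : ℝ) := by exact_mod_cast h1
      _ = (4:ℝ) ^ n := by rw [h2]; push_cast; rw [← mul_pow]; norm_num
  have hBadlt : ∑ f ∈ Bad, P f < 1 := by
    have hq0 : (0:ℝ) ≤ ((11/10:ℝ)^10/3)^m := by positivity
    have key : (4:ℝ) ^ n * ((11/10:ℝ)^10/3)^m < 1 := by
      rw [hm, pow_mul, ← mul_pow]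
      apply pow_lt_one₀ (by positivity) ?_ (by omega)
      norm_num
    calc ∑ f ∈ Bad, P f ≤ (Large.card : ℝ) * ((11/10:ℝ)^10/3)^m := hBadsum
      _ ≤ (4:ℝ) ^ n * ((11/10:ℝ)^10/3)^m := by
          exact mul_le_mul_of_nonneg_right hcardLarge hq0
      _ < 1 := key
  -- find a good sample
  have hGood : ∃ f : Fin t → (Finset α × Finset α), (¬ ∃ p ∈ Large, m + 1 ≤ misses p f) ∧ P f ≠ 0 := by
    by_contra hc
    push_neg at hc
    have hzero : ∑ f ∈ univ.filter
        (fun f : Fin t → (Finset α × Finset α) => ¬ ∃ p ∈ Large, m + 1 ≤ misses p f), P f = 0 := by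
      apply Finset.sum_eq_zero
      intro f hf
      have hf2 := (Finset.mem_filter.mp hf).2
      push_neg at hf2
      exact hc f hf2
    have := Finset.sum_filter_add_sum_filter_not univ
      (fun f : Fin t → (Finset α × Finset α) => ∃ p ∈ Large, m + 1 ≤ misses p f) P
    rw [hPsum] at this
    rw [hBadDef] at hBadlt
    linarith [hBadlt, hzero, this]
  obtain ⟨f, hfgood, hfP⟩ := hGood
  have hfμ : ∀ i, μ (f i) ≠ 0 := by
    intro i hzero
    exact hfP (Finset.prod_eq_zero (Finset.mem_univ i) hzero)
  push_neg at hfgood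
  -- the empirical distribution
  set ν : (Finset α × Finset α) → ℝ := fun R => ((univ.filter (fun i => f i = R)).card : ℝ) / t with hν
  have hν0 : ∀ R, 0 ≤ ν R := fun R => div_nonneg (Nat.cast_nonneg _) (Nat.cast_nonneg _)
  have hνsum : ∑ R : (Finset α × Finset α), ν R = 1 := by
    rw [hν]
    rw [← Finset.sum_div]
    rw [div_eq_one_iff_eq (by positivity : (t:ℝ) ≠ 0)]
    have := Finset.card_eq_sum_card_fiberwise
      (f := f) (s := (univ : Finset (Fin t))) (t := (univ : Finset (Finset α × Finset α)))
      (fun x _ => Finset.mem_univ _)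
    rw [Finset.card_univ, Fintype.card_fin] at this
    rw [← Nat.cast_sum, ← this]
  refine ⟨ν, hν0, hνsum, ?_, ?_, ?_⟩
  · -- support of ν inside support of μ
    intro R hR
    have hcard : (univ.filter (fun i => f i = R)).card ≠ 0 := by
      intro h0
      apply hR
      rw [hν]; dsimp only; rw [h0]; simp
    obtain ⟨i, hi⟩ := Finset.card_pos.mp (Nat.pos_of_ne_zero hcard)
    have : f i = R := (Finset.mem_filter.mp hi).2
    rw [← this]
    exact hfμ i
  · -- hitting
    intro X Y hX hY
    have hpL : (X, Y) ∈ Large := by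
      rw [hLarge]
      exact Finset.mem_filter.mpr ⟨Finset.mem_univ _, hX, hY⟩
    have hmiss : misses (X, Y) f ≤ m := by
      by_contra hc
      exact absurd (hfgood (X, Y) hpL) (by omega)
    set H : Finset (Fin t) := univ.filter
      (fun i => ((f i).1 ∩ X).Nonempty ∧ ((f i).2 ∩ Y).Nonempty) with hH
    have hHm : H.card + misses (X, Y) f = t := by
      rw [hH, hmisses]
      have := Finset.card_filter_add_card_filter_not
        (s := (univ : Finset (Fin t)))
        (fun i => ((f i).1 ∩ X).Nonempty ∧ ((f i).2 ∩ Y).Nonempty)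
      rw [Finset.card_univ, Fintype.card_fin] at this
      exact this
    have hHcard : 9 * m ≤ H.card := by omega
    have hfib : (H.card : ℝ) = ∑ R ∈ univ.filter
        (fun R : (Finset α × Finset α) => (R.1 ∩ X).Nonempty ∧ (R.2 ∩ Y).Nonempty),
        ((univ.filter (fun i => f i = R)).card : ℝ) := by
      have h1 := Finset.card_eq_sum_card_fiberwise
        (f := f) (s := H)
        (t := univ.filter (fun R : (Finset α × Finset α) => (R.1 ∩ X).Nonempty ∧ (R.2 ∩ Y).Nonempty))
        (fun i hi => Finset.mem_filter.mpr ⟨Finset.mem_univ _, (Finset.mem_filter.mp hi).2⟩)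
      rw [h1]
      push_cast
      apply Finset.sum_congr rfl
      intro R hR
      congr 1
      rw [hH]
      rw [Finset.filter_filter]
      congr 1
      apply Finset.filter_congr
      intro i _
      constructor
      · rintro ⟨_, h⟩; exact h
      · intro h
        refine ⟨?_, h⟩
        rw [h]
        exact (Finset.mem_filter.mp hR).2
    have hhp : hitProb ν X Y = (H.card : ℝ) / t := by
      rw [hitProb, hfib, hν]
      rw [Finset.sum_div]
    rw [hhp]
    rw [le_div_iff₀ (by exact_mod_cast htpos : (0:ℝ) < (t:ℝ))]
    have h9 : (9:ℝ) * (m:ℝ) ≤ (H.card : ℝ) := by exact_mod_cast hHcard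
    have htm : (t:ℝ) = 10 * (m:ℝ) := by exact_mod_cast ht
    linarith
  · -- support size
    have hsub : {R : (Finset α × Finset α) | ν R ≠ 0} ⊆ ↑(univ.image f) := by
      intro R hR
      have hcard : (univ.filter (fun i => f i = R)).card ≠ 0 := by
        intro h0
        apply hR
        rw [hν]; dsimp only; rw [h0]; simp
      obtain ⟨i, hi⟩ := Finset.card_pos.mp (Nat.pos_of_ne_zero hcard)
      simp only [Finset.coe_image, Set.mem_image, Finset.mem_coe]
      exact ⟨i, Finset.mem_coe.mpr (Finset.mem_univ i), (Finset.mem_filter.mp hi).2⟩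
    calc Nat.card {R : (Finset α × Finset α) // ν R ≠ 0} = {R : (Finset α × Finset α) | ν R ≠ 0}.ncard :=
        Nat.card_coe_set_eq _
      _ ≤ (↑(univ.image f) : Set (Finset α × Finset α)).ncard :=
        Set.ncard_le_ncard hsub (Finset.finite_toSet _)
      _ = (univ.image f).card := Set.ncard_coe_finset _
      _ ≤ (univ : Finset (Fin t)).card := Finset.card_image_le
      _ = t := by rw [Finset.card_univ, Fintype.card_fin]
      _ = 100 * n := by rw [ht, hm]; ring

/-- There is a universal constant `C` such that for every `k ≥ 1`, every
(possibly partial) `g : {0,1}^k × {0,1}^k → {0,1}`, every `b ∈ {0,1}` and every positive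
integer `h`: if `g` has a `(1/20, h)`-hitting distribution over its `b`-monochromatic
rectangles, then `g` has a `(1/10, h)`-hitting distribution over its `b`-monochromatic
rectangles whose support has size at most `C·2^k`. -/
theorem hitting_distribution_small_support :
    ∃ C : ℝ, ∀ k : ℕ, 1 ≤ k →
      ∀ g : (Fin k → Bool) → (Fin k → Bool) → Option Bool, ∀ b : Bool, ∀ h : ℕ, 1 ≤ h →
        (∃ μ : Finset (Fin k → Bool) × Finset (Fin k → Bool) → ℝ,
          IsDistribution μ ∧
          (∀ R, μ R ≠ 0 → ∀ x ∈ R.1, ∀ y ∈ R.2, g x y = some b) ∧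
          IsHitting μ (1 / 20) (h : ℤ)) →
        (∃ μ : Finset (Fin k → Bool) × Finset (Fin k → Bool) → ℝ,
          IsDistribution μ ∧
          (∀ R, μ R ≠ 0 → ∀ x ∈ R.1, ∀ y ∈ R.2, g x y = some b) ∧
          IsHitting μ (1 / 10) (h : ℤ) ∧
          (Nat.card {R : Finset (Fin k → Bool) × Finset (Fin k → Bool) // μ R ≠ 0} : ℝ)
            ≤ C * 2 ^ k) := by
  classical
  refine ⟨100, ?_⟩
  intro k _hk g b hnat _hh
  rintro ⟨μ, ⟨hμ0, hμ1⟩, hmono, hhit⟩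
  obtain ⟨ν, hν0, hνsum, hsupp, hνhit, hcard⟩ := exists_sparse μ (hnat : ℤ) hμ0 hμ1 hhit
  refine ⟨ν, ⟨hν0, hνsum⟩, ?_, hνhit, ?_⟩
  · intro R hR x hx y hy
    exact hmono R (hsupp R hR) x hx y hy
  · have hck : Fintype.card (Fin k → Bool) = 2 ^ k := by simp
    calc (Nat.card {R : Finset (Fin k → Bool) × Finset (Fin k → Bool) // ν R ≠ 0} : ℝ)
        ≤ ((100 * Fintype.card (Fin k → Bool) : ℕ) : ℝ) := by exact_mod_cast hcard
      _ = 100 * 2 ^ k := by rw [hck]; push_cast; ring
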